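/- Let 0 < k ≤ 2, M ≥ 0 and 0 < μ ≤ 1. Let (f_n)_{n≥1} be a real sequence with Σ_{n≥1} (1+n²)^{2k} f_n² ≤ M². Then (Σ_{n≥1} (μ² f_n / (μ² + Φ(n,φ)²))²)^{1/2} ≤ max{1, D₂² / [B₁(1 − e^{−D₁T})]²} · M · μ^{k/2}. (This bounds the bias ‖f − f_μ‖ of the Tikhonov approximation with exact data.) -/

import Mathlib

set_option maxHeartbeats 2000000 in
/-- bias bound, `0 < k ≤ 2`: if `Σ (1+n²)^{2k} f_n² ≤ M²` and `0 < μ ≤ 1`, then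
`(Σ (μ² f_n/(μ² + Φ(n,φ)²))²)^{1/2} ≤ max{1, D₂²/[B₁(1−e^{−D₁T})]²} · M · μ^{k/2}`. -/
theorem stmt_8
    (T D₁ D₂ B₁ B₂ : ℝ) (hT : 0 < T) (hD₁ : 0 < D₁) (hD₁₂ : D₁ ≤ D₂)
    (hB₁ : 0 < B₁) (hB₁₂ : B₁ ≤ B₂)
    (a φ : ℝ → ℝ) (ha : ContinuousOn a (Set.Icc 0 T)) (hφc : ContinuousOn φ (Set.Icc 0 T))
    (haB : ∀ t ∈ Set.Icc 0 T, D₁ ≤ a t ∧ a t ≤ D₂)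
    (hφB : ∀ t ∈ Set.Icc 0 T, B₁ ≤ φ t ∧ φ t ≤ B₂)
    (A Bf : ℝ → ℝ) (hA : ∀ t, A t = ∫ s in (0:ℝ)..t, a s)
    (hBf : ∀ t, Bf t = A t - A T)
    (Φ : ℕ → (ℝ → ℝ) → ℝ)
    (hΦ : ∀ (n : ℕ) (h : ℝ → ℝ), Φ n h = ∫ t in (0:ℝ)..T, Real.exp ((n:ℝ)^2 * Bf t) * h t)
    (k M μ : ℝ) (hk0 : 0 < k) (hk2 : k ≤ 2) (hM : 0 ≤ M) (hμ0 : 0 < μ) (hμ1 : μ ≤ 1)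
    (f : ℕ → ℝ)
    (hwsum : Summable (fun n : ℕ => ((1:ℝ) + ((n:ℝ)+1)^2) ^ (2*k) * (f (n+1))^2))
    (hbound : (∑' n : ℕ, ((1:ℝ) + ((n:ℝ)+1)^2) ^ (2*k) * (f (n+1))^2) ≤ M^2) :
    Real.sqrt (∑' n : ℕ, (μ^2 * f (n+1) / (μ^2 + (Φ (n+1) φ)^2))^2) ≤
      max 1 (D₂^2 / (B₁ * (1 - Real.exp (-D₁ * T)))^2) * M * μ ^ (k/2) := by
  have hT' : (0:ℝ) ≤ T := hT.le
  have hIcc : Set.uIcc (0:ℝ) T = Set.Icc 0 T := Set.uIcc_of_le hT'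
  have hexpT : Real.exp (-D₁ * T) < 1 := by
    rw [Real.exp_lt_one_iff]; nlinarith
  set c := B₁ * (1 - Real.exp (-D₁ * T)) / D₂ with hc_def
  have hD₂ : 0 < D₂ := lt_of_lt_of_le hD₁ hD₁₂
  have hc : 0 < c := by
    apply div_pos _ hD₂
    have : 0 < 1 - Real.exp (-D₁ * T) := by linarith
    positivity
  set C := max 1 (D₂^2 / (B₁ * (1 - Real.exp (-D₁ * T)))^2) with hC_def
  have hC1 : (1:ℝ) ≤ C := le_max_left _ _
  have hC0 : (0:ℝ) < C := lt_of_lt_of_le one_pos hC1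
  have hCinv : (c⁻¹)^2 ≤ C := by
    have h1 : c⁻¹ = D₂ / (B₁ * (1 - Real.exp (-D₁ * T))) := by
      rw [hc_def, inv_div]
    rw [h1, div_pow]
    exact le_max_right _ _
  -- Integrability of a
  have ha' : ContinuousOn a (Set.uIcc 0 T) := by rwa [hIcc]
  have hInt : IntervalIntegrable a MeasureTheory.volume 0 T := ha'.intervalIntegrable
  -- continuity of A on [0,T]
  have hAeq : A = fun x => ∫ s in (0:ℝ)..x, a s := funext hA
  have hAc : ContinuousOn A (Set.Icc 0 T) := by
    rw [hAeq, ← hIcc]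
    apply intervalIntegral.continuousOn_primitive_interval
    rw [hIcc]
    exact ha.integrableOn_Icc
  -- continuity of Bf on [0,T]
  have hBfc : ContinuousOn Bf (Set.Icc 0 T) := by
    have : ContinuousOn (fun t => A t - A T) (Set.Icc 0 T) := hAc.sub continuousOn_const
    exact this.congr fun t _ => hBf t
  -- Bf lower bound : for t ∈ [0,T], D₂ * (t - T) ≤ Bf t
  have hBflb : ∀ t ∈ Set.Icc (0:ℝ) T, D₂ * (t - T) ≤ Bf t := by
    intro t ht
    obtain ⟨ht0, htT⟩ := ht
    have hInt_t : IntervalIntegrable a MeasureTheory.volume t T := by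
      apply hInt.mono_set
      rw [Set.uIcc_of_le htT, hIcc]
      exact Set.Icc_subset_Icc ht0 le_rfl
    have hInt_0t : IntervalIntegrable a MeasureTheory.volume 0 t := by
      apply hInt.mono_set
      rw [Set.uIcc_of_le ht0, hIcc]
      exact Set.Icc_subset_Icc le_rfl htT
    have hsub : A T - A t = ∫ s in t..T, a s := by
      rw [hA, hA]
      exact intervalIntegral.integral_interval_sub_left hInt hInt_0t
    have hub : (∫ s in t..T, a s) ≤ D₂ * (T - t) := by
      have : (∫ s in t..T, a s) ≤ ∫ _ in t..T, D₂ := by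
        apply intervalIntegral.integral_mono_on htT hInt_t intervalIntegrable_const
        intro s hs
        exact (haB s ⟨le_trans ht0 hs.1, hs.2⟩).2
      simpa [mul_comm] using this
    rw [hBf]
    have := hsub ▸ hub
    linarith
  -- the exponential integral
  have key : ∀ m : ℝ, 0 < m →
      (∫ t in (0:ℝ)..T, Real.exp (m * (t - T))) = (1 - Real.exp (-(m * T))) / m := by
    intro m hm
    have hderiv : ∀ t ∈ Set.uIcc (0:ℝ) T,
        HasDerivAt (fun t => Real.exp (m * (t - T)) / m) (Real.exp (m * (t - T))) t := by
      intro t _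
      have h1 : HasDerivAt (fun t : ℝ => m * (t - T)) m t := by
        simpa using ((hasDerivAt_id t).sub_const T).const_mul m
      have h2 := (h1.exp).div_const m
      simpa [mul_div_assoc, mul_div_cancel_right₀ _ hm.ne'] using h2
    have hci : IntervalIntegrable (fun t => Real.exp (m * (t - T))) MeasureTheory.volume 0 T := by
      apply Continuous.intervalIntegrable
      exact Real.continuous_exp.comp (continuous_const.mul (continuous_id.sub continuous_const))
    rw [intervalIntegral.integral_eq_sub_of_hasDerivAt hderiv hci]
    simp [sub_div, neg_mul, mul_comm]
  -- lower bound for Φ n φ, n ≥ 1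
  have hΦlb : ∀ n : ℕ, 1 ≤ n → c / (n:ℝ)^2 ≤ Φ n φ := by
    intro n hn
    have hn1 : (1:ℝ) ≤ (n:ℝ) := by exact_mod_cast hn
    set m := (n:ℝ)^2 * D₂ with hm_def
    have hm : 0 < m := by positivity
    have hn2' : (1:ℝ) ≤ (n:ℝ)^2 := by nlinarith
    have hmD₁ : D₁ ≤ m := by nlinarith [mul_le_mul_of_nonneg_right hn2' hD₂.le]
    -- integrand continuity
    have hgc : ContinuousOn (fun t => Real.exp ((n:ℝ)^2 * Bf t) * φ t) (Set.Icc 0 T) := by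
      exact (Real.continuous_exp.comp_continuousOn (continuousOn_const.mul hBfc)).mul hφc
    have hgint : IntervalIntegrable (fun t => Real.exp ((n:ℝ)^2 * Bf t) * φ t)
        MeasureTheory.volume 0 T := by
      apply ContinuousOn.intervalIntegrable; rwa [hIcc]
    have hlint : IntervalIntegrable (fun t => Real.exp (m * (t - T)) * B₁)
        MeasureTheory.volume 0 T := by
      apply Continuous.intervalIntegrable
      exact (Real.continuous_exp.comp (continuous_const.mul (continuous_id.sub continuous_const))).mul continuous_const
    have hmono : (∫ t in (0:ℝ)..T, Real.exp (m * (t - T)) * B₁) ≤ Φ n φ := by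
      rw [hΦ]
      apply intervalIntegral.integral_mono_on hT' hlint hgint
      intro t ht
      have h1 : m * (t - T) ≤ (n:ℝ)^2 * Bf t := by
        have := hBflb t ht
        have hn2 : (1:ℝ) ≤ (n:ℝ)^2 := by nlinarith
        have htT : t - T ≤ 0 := by linarith [ht.2]
        calc m * (t - T) = (n:ℝ)^2 * (D₂ * (t - T)) := by ring
          _ ≤ (n:ℝ)^2 * Bf t := by
              apply mul_le_mul_of_nonneg_left this (by positivity)
      exact mul_le_mul (Real.exp_le_exp.2 h1) (hφB t ht).1 hB₁.le (Real.exp_nonneg _)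
    have hval : (∫ t in (0:ℝ)..T, Real.exp (m * (t - T)) * B₁)
        = (1 - Real.exp (-(m * T))) / m * B₁ := by
      rw [intervalIntegral.integral_mul_const, key m hm]
    have hfinal : c / (n:ℝ)^2 ≤ (1 - Real.exp (-(m * T))) / m * B₁ := by
      have hexp2 : Real.exp (-(m * T)) ≤ Real.exp (-D₁ * T) := by
        apply Real.exp_le_exp.2; nlinarith
      have h1 : c / (n:ℝ)^2 = B₁ * (1 - Real.exp (-D₁*T)) / m := by
        rw [hc_def, hm_def, div_div]
        ring_nf
      have h2 : (1 - Real.exp (-(m*T)))/m * B₁ = B₁ * (1 - Real.exp (-(m*T))) / m := by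
        ring
      rw [h1, h2]
      gcongr <;> linarith
    calc c / (n:ℝ)^2 ≤ (1 - Real.exp (-(m * T))) / m * B₁ := hfinal
      _ = _ := hval.symm
      _ ≤ Φ n φ := hmono
  -- weight sequence
  set w : ℕ → ℝ := fun n => ((1:ℝ) + ((n:ℝ)+1)^2) ^ (2*k) * (f (n+1))^2 with hw_def
  have hμk : (0:ℝ) < μ ^ k := Real.rpow_pos_of_pos hμ0 k
  -- termwise bound
  have hterm : ∀ n : ℕ, (μ^2 * f (n+1) / (μ^2 + (Φ (n+1) φ)^2))^2 ≤ C * μ^k * w n := by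
    intro n
    have hμ2 : (0:ℝ) < μ^2 := pow_pos hμ0 2
    obtain ⟨N, hN_def⟩ : ∃ N : ℝ, N = (n:ℝ) + 1 := ⟨_, rfl⟩
    have hNn : (0:ℝ) ≤ (n:ℝ) := Nat.cast_nonneg n
    have hN0 : (0:ℝ) < N := by rw [hN_def]; linarith
    have hN1 : (1:ℝ) ≤ N := by rw [hN_def]; linarith
    have hN2 : (0:ℝ) < N^2 := pow_pos hN0 2
    obtain ⟨P, hP_def⟩ : ∃ P : ℝ, P = Φ (n+1) φ := ⟨_, rfl⟩
    rw [← hP_def]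
    have hPlb : c / N^2 ≤ P := by
      have h := hΦlb (n+1) (Nat.le_add_left 1 n)
      rw [Nat.cast_add, Nat.cast_one] at h
      rw [hP_def, hN_def]
      exact h
    have hcN : (0:ℝ) < c / N^2 := div_pos hc hN2
    have hP0 : 0 < P := lt_of_lt_of_le hcN hPlb
    have hP2 : (0:ℝ) < P^2 := pow_pos hP0 2
    have hden : (0:ℝ) < μ^2 + P^2 := by linarith
    obtain ⟨r, hr_def⟩ : ∃ r : ℝ, r = μ^2 / (μ^2 + P^2) := ⟨_, rfl⟩
    have hr0 : 0 ≤ r := hr_def ▸ le_of_lt (div_pos hμ2 hden)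
    have hr1 : r ≤ 1 := by
      rw [hr_def, div_le_one hden]; nlinarith
    have hrP : r ≤ μ^2 / P^2 := by
      rw [hr_def]
      exact div_le_div_of_nonneg_left hμ2.le hP2 (by linarith)
    have hx0 : (0:ℝ) < μ * N^2 / c := div_pos (mul_pos hμ0 hN2) hc
    have hq0 : (0:ℝ) < μ^2 / P^2 := div_pos hμ2 hP2
    have hstep2 : r ≤ (μ^2 / P^2) ^ (k/2) := by
      rcases le_total 1 (μ^2 / P^2) with h | h
      · calc r ≤ 1 := hr1
          _ ≤ (μ^2 / P^2) ^ (k/2) := Real.one_le_rpow h (by linarith)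
      · calc r ≤ μ^2 / P^2 := hrP
          _ = (μ^2 / P^2) ^ (1:ℝ) := (Real.rpow_one _).symm
          _ ≤ (μ^2 / P^2) ^ (k/2) :=
              Real.rpow_le_rpow_of_exponent_ge hq0 h (by linarith)
    have hstep3 : (μ^2 / P^2) ^ (k/2) ≤ (μ * N^2 / c) ^ k := by
      have hcne : c ≠ 0 := hc.ne'
      have hNne : N ≠ 0 := hN0.ne'
      have hle : μ^2 / P^2 ≤ (μ * N^2 / c)^2 := by
        have h1 : (c / N^2)^2 ≤ P^2 := by
          apply sq_le_sq' _ hPlb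
          linarith
        have h2 : μ^2 / P^2 ≤ μ^2 / (c/N^2)^2 :=
          div_le_div_of_nonneg_left hμ2.le (pow_pos hcN 2) h1
        calc μ^2 / P^2 ≤ μ^2 / (c/N^2)^2 := h2
          _ = (μ * N^2 / c)^2 := by
              field_simp
      calc (μ^2 / P^2) ^ (k/2) ≤ ((μ * N^2 / c)^2) ^ (k/2) :=
            Real.rpow_le_rpow hq0.le hle (by linarith)
        _ = (μ * N^2 / c) ^ k := by
            rw [← Real.rpow_natCast (μ * N^2 / c) 2, ← Real.rpow_mul hx0.le]
            congr 1
            push_cast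
            ring
    have hcK : (c ^ k)⁻¹ ≤ C := by
      rcases le_total 1 c with h | h
      · have h1 : (1:ℝ) ≤ c ^ k := Real.one_le_rpow h hk0.le
        calc (c ^ k)⁻¹ ≤ 1 := by
              rw [inv_le_one_iff₀]; right; exact h1
          _ ≤ C := hC1
      · have h2 : c ^ (2:ℝ) ≤ c ^ k := Real.rpow_le_rpow_of_exponent_ge hc h hk2
        have h3 : (c ^ k)⁻¹ ≤ (c ^ (2:ℝ))⁻¹ :=
          inv_anti₀ (Real.rpow_pos_of_pos hc 2) h2
        calc (c ^ k)⁻¹ ≤ (c ^ (2:ℝ))⁻¹ := h3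
          _ = (c⁻¹)^2 := by
              rw [show (2:ℝ) = ((2:ℕ):ℝ) by norm_num, Real.rpow_natCast, ← inv_pow]
          _ ≤ C := hCinv
    have hNK : (N^2) ^ k ≤ ((1:ℝ) + N^2) ^ (2*k) := by
      calc (N^2) ^ k ≤ ((1:ℝ) + N^2) ^ k :=
            Real.rpow_le_rpow (sq_nonneg N) (by linarith) hk0.le
        _ ≤ ((1:ℝ) + N^2) ^ (2*k) := by
            apply Real.rpow_le_rpow_of_exponent_le (by nlinarith) (by linarith)
    have hsplit : (μ * N^2 / c) ^ k = μ ^ k * (N^2) ^ k * (c ^ k)⁻¹ := by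
      rw [Real.div_rpow (mul_pos hμ0 hN2).le hc.le,
        Real.mul_rpow hμ0.le (sq_nonneg N), div_eq_mul_inv]
    have hrK : r ≤ C * μ^k * ((1:ℝ) + N^2) ^ (2*k) := by
      calc r ≤ (μ^2 / P^2) ^ (k/2) := hstep2
        _ ≤ (μ * N^2 / c) ^ k := hstep3
        _ = μ ^ k * (N^2) ^ k * (c ^ k)⁻¹ := hsplit
        _ ≤ μ ^ k * (((1:ℝ) + N^2) ^ (2*k)) * C := by
            apply mul_le_mul (mul_le_mul_of_nonneg_left hNK hμk.le) hcK
              (inv_nonneg.2 (Real.rpow_pos_of_pos hc k).le)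
              (mul_nonneg hμk.le (Real.rpow_nonneg (by nlinarith) _))
        _ = C * μ^k * ((1:ℝ) + N^2) ^ (2*k) := by ring
    have heq : μ^2 * f (n+1) / (μ^2 + P^2) = r * f (n+1) := by
      rw [hr_def]; ring
    rw [heq, mul_pow]
    have hr2 : r^2 ≤ r := by nlinarith
    calc r^2 * (f (n+1))^2 ≤ (C * μ^k * ((1:ℝ) + N^2) ^ (2*k)) * (f (n+1))^2 := by
          apply mul_le_mul_of_nonneg_right _ (sq_nonneg _)
          exact le_trans hr2 hrK
      _ = C * μ^k * w n := by simp only [hw_def, hN_def]; ring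
  -- summability and tsum bounds
  have hwsum' : Summable (fun n : ℕ => C * μ^k * w n) := hwsum.mul_left _
  have hsum : Summable (fun n : ℕ => (μ^2 * f (n+1) / (μ^2 + (Φ (n+1) φ)^2))^2) :=
    Summable.of_nonneg_of_le (fun n => sq_nonneg _) hterm hwsum'
  have htsum : (∑' n : ℕ, (μ^2 * f (n+1) / (μ^2 + (Φ (n+1) φ)^2))^2)
      ≤ C * μ^k * M^2 := by
    calc (∑' n : ℕ, (μ^2 * f (n+1) / (μ^2 + (Φ (n+1) φ)^2))^2)
        ≤ ∑' n : ℕ, C * μ^k * w n := Summable.tsum_le_tsum hterm hsum hwsum'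
      _ = C * μ^k * ∑' n : ℕ, w n := tsum_mul_left
      _ ≤ C * μ^k * M^2 := by
          exact mul_le_mul_of_nonneg_left hbound (mul_pos hC0 hμk).le
  -- conclude
  have hμk2 : (μ ^ (k/2))^2 = μ ^ k := by
    rw [← Real.rpow_natCast (μ ^ (k/2)) 2, ← Real.rpow_mul hμ0.le]
    norm_num
  have hRHS0 : 0 ≤ C * M * μ ^ (k/2) :=
    mul_nonneg (mul_nonneg hC0.le hM) (Real.rpow_pos_of_pos hμ0 _).le
  calc Real.sqrt (∑' n : ℕ, (μ^2 * f (n+1) / (μ^2 + (Φ (n+1) φ)^2))^2)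
      ≤ Real.sqrt ((C * M * μ ^ (k/2))^2) := by
        apply Real.sqrt_le_sqrt
        have : (C * M * μ ^ (k/2))^2 = C^2 * M^2 * μ^k := by
          rw [mul_pow, mul_pow, hμk2]
        rw [this]
        nlinarith [sq_nonneg M, hμk, hC0, hC1, htsum]
    _ = C * M * μ ^ (k/2) := Real.sqrt_sq hRHS0
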